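/- Let V be an 𝔏-module, let k ∈ ℤ with k ≥ 1, and let w ∈ V satisfy L_k w = L_{k+1} w = G_{k+1/2} w = 0. Then there exists N ∈ ℕ such that L_i w = 0 and G_{i-1/2} w = 0 for all integers i ≥ N. -/

import Mathlib

/-- An `𝔏`-module: a complex vector space with operators `L m` (`m ∈ ℤ`) and
`G k` (representing `G_{k+1/2}`, `k ∈ ℤ`) satisfying
`[L_m, L_n] = (n-m) L_{m+n}`, `[L_m, G_r] = (r - m/2) G_{m+r}` (with `r = k+1/2`),
and `G_r G_s + G_s G_r = 0`. -/
structure LModule (V : Type) [AddCommGroup V] [Module ℂ V] where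
  L : ℤ → Module.End ℂ V
  G : ℤ → Module.End ℂ V
  hLL : ∀ m n : ℤ, L m * L n - L n * L m = ((n - m : ℤ) : ℂ) • L (m + n)
  hLG : ∀ m k : ℤ, L m * G k - G k * L m = (((2 * k + 1 - m : ℤ) : ℂ) / 2) • G (m + k)
  hGG : ∀ k l : ℤ, G k * G l + G l * G k = 0

/-- if `V` is an 𝔏-module, `k ≥ 1`, and `w ∈ V` satisfies
`L_k w = L_{k+1} w = G_{k+1/2} w = 0` (here `G_{k+1/2}` is encoded as `G k`),
then there is `N ∈ ℕ` with `L_i w = 0` and `G_{i-1/2} w = 0` (encoded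
`G (i-1) w = 0`) for all integers `i ≥ N`. -/
theorem stmt11 {V : Type} [AddCommGroup V] [Module ℂ V] (M : LModule V)
    (k : ℤ) (hk : 1 ≤ k) (w : V)
    (h1 : M.L k w = 0) (h2 : M.L (k + 1) w = 0) (h3 : M.G k w = 0) :
    ∃ N : ℕ, ∀ i : ℤ, (N : ℤ) ≤ i → M.L i w = 0 ∧ M.G (i - 1) w = 0 := by
  -- Lemma A: distinct annihilating L's produce a new annihilating L.
  have hA : ∀ a b : ℤ, a ≠ b → M.L a w = 0 → M.L b w = 0 → M.L (a + b) w = 0 := by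
    intro a b hab ha hb
    have h := LinearMap.congr_fun (M.hLL a b) w
    simp only [LinearMap.sub_apply, Module.End.mul_apply, LinearMap.smul_apply,
      ha, hb, map_zero, sub_zero] at h
    have hc : ((b - a : ℤ) : ℂ) ≠ 0 := by
      exact_mod_cast sub_ne_zero.mpr (Ne.symm hab)
    rcases smul_eq_zero.mp h.symm with hc' | hz
    · exact absurd hc' hc
    · exact hz
  -- Lemma B: an annihilating L and annihilating G produce a new annihilating G.
  have hB : ∀ m j : ℤ, 2 * j + 1 ≠ m → M.L m w = 0 → M.G j w = 0 →
      M.G (m + j) w = 0 := by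
    intro m j hmj hm hj
    have h := LinearMap.congr_fun (M.hLG m j) w
    simp only [LinearMap.sub_apply, Module.End.mul_apply, LinearMap.smul_apply,
      hm, hj, map_zero, sub_zero] at h
    have hc : (((2 * j + 1 - m : ℤ) : ℂ) / 2) ≠ 0 := by
      apply div_ne_zero
      · exact_mod_cast sub_ne_zero.mpr hmj
      · norm_num
    rcases smul_eq_zero.mp h.symm with hc' | hz
    · exact absurd hc' hc
    · exact hz
  -- Key induction: L_{n k + j} w = 0 for n ≥ 2, 1 ≤ j ≤ n - 1.
  have key : ∀ n : ℤ, 2 ≤ n → ∀ j : ℤ, 1 ≤ j → j ≤ n - 1 → M.L (n * k + j) w = 0 := by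
    intro n
    refine Int.le_induction (motive := fun n _ => ∀ j : ℤ, 1 ≤ j → j ≤ n - 1 → M.L (n * k + j) w = 0) (m := 2) ?_ ?_ n
    · intro j hj1 hj2
      have hj : j = 1 := by omega
      subst hj
      have := hA k (k + 1) (by omega) h1 h2
      have he : 2 * k + 1 = k + (k + 1) := by ring
      rw [he]; exact this
    · intro m hm ih j hj1 hj2
      rcases le_or_gt j (m - 1) with hcase | hcase
      · -- (m+1)k + j = k + (m k + j)
        have hne : k ≠ m * k + j := by nlinarith
        have h' := hA k (m * k + j) hne h1 (ih j hj1 hcase)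
        have he : (m + 1) * k + j = k + (m * k + j) := by ring
        rw [he]; exact h'
      · -- j = m, use (m+1)k + m = (k+1) + (m k + (m-1))
        have hj : j = m := by omega
        subst hj
        have hprev := ih (j - 1) (by omega) (by omega)
        have hne : k + 1 ≠ j * k + (j - 1) := by nlinarith
        have h' := hA (k + 1) (j * k + (j - 1)) hne h2 hprev
        have he : (j + 1) * k + j = (k + 1) + (j * k + (j - 1)) := by ring
        rw [he]; exact h'
  -- All L_i with i ≥ (k+1)^2 annihilate w.
  have hL : ∀ i : ℤ, (k + 1) ^ 2 ≤ i → M.L i w = 0 := by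
    intro i hi
    have hk0 : 0 < k := by omega
    set n := (i - 1) / k with hn
    set r := (i - 1) % k with hr
    have hdm : k * n + r = i - 1 := Int.mul_ediv_add_emod (i - 1) k
    have hr0 : 0 ≤ r := Int.emod_nonneg _ (by omega)
    have hrk : r < k := Int.emod_lt_of_pos _ hk0
    have hik : k * k + 2 * k + 1 ≤ i := by nlinarith
    have hkn : k * (k + 1) < k * n := by nlinarith
    have hnk : k + 1 < n := lt_of_mul_lt_mul_left hkn (by omega)
    have h' := key n (by omega) (r + 1) (by omega) (by omega)
    have he : i = n * k + (r + 1) := by linarith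
    rw [he]; exact h'
  -- Choose N.
  refine ⟨((k + 1) ^ 2 + k + 1).toNat, ?_⟩
  intro i hi
  have hN : (((k + 1) ^ 2 + k + 1).toNat : ℤ) = (k + 1) ^ 2 + k + 1 := by
    apply Int.toNat_of_nonneg; positivity
  rw [hN] at hi
  constructor
  · exact hL i (by nlinarith)
  · have hm : (k + 1) ^ 2 ≤ i - 1 - k := by linarith
    have hLm := hL (i - 1 - k) hm
    have hne : 2 * k + 1 ≠ i - 1 - k := by nlinarith
    have h' := hB (i - 1 - k) k hne hLm h3
    have he : i - 1 = (i - 1 - k) + k := by ring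
    rw [he]; exact h'
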